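/- Let X₁, X₂ ~ N(0,1) and Y₁ ~ N(0,1) be independent standard normals and Z = X₁X₂/Y₁. Then Z has probability density function f(z) = (1/(√2 π^{3/2})) e^{z²/2} E₁(z²/2) for z ≠ 0, where E₁(x) = ∫_x^∞ e^{-t}/t dt is the exponential integral. -/

import Mathlib

open MeasureTheory ProbabilityTheory Real Set
open scoped ENNReal NNReal

/-- The exponential integral `E₁(x) = ∫_x^∞ e^{-t}/t dt`. -/
noncomputable def expInt (x : ℝ) : ℝ := ∫ t in Set.Ioi x, Real.exp (-t) / t

-- helper: scaling for lintegral
lemma lem_scale {c : ℝ} (hc : c ≠ 0) {h : ℝ → ℝ≥0∞} (hm : Measurable h) :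
    ∫⁻ x, h x = ENNReal.ofReal |c| * ∫⁻ t, h (c * t) := by
  have hmap := Real.map_volume_mul_left hc
  have : ∫⁻ t, h (c * t) = ∫⁻ x, h x ∂(Measure.map (c * ·) volume) :=
    (lintegral_map hm (measurable_const_mul c)).symm
  rw [this, hmap, lintegral_smul_measure, smul_eq_mul, ← mul_assoc, ← ENNReal.ofReal_mul (abs_nonneg _),
    ← abs_mul, mul_inv_cancel₀ hc, abs_one, ENNReal.ofReal_one, one_mul]

-- helper: CDF measurable
lemma meas_gaussCDF : Measurable fun s : ℝ => gaussianReal 0 1 (Iic s) := by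
  have : (fun s : ℝ => gaussianReal 0 1 (Iic s)) =
      fun s => gaussianReal 0 1 (Prod.mk s ⁻¹' {p : ℝ × ℝ | p.2 ≤ p.1}) := by
    rfl
  rw [this]
  exact measurable_measure_prodMk_left (measurableSet_le measurable_snd measurable_fst)

-- helper: symmetry
lemma gauss_neg : Measure.map (fun x : ℝ => -x) (gaussianReal 0 1) = gaussianReal 0 1 := by
  have := gaussianReal_map_const_mul (μ := 0) (v := 1) (-1)
  simp only [neg_mul, one_mul, mul_zero] at this
  convert this using 2 <;> simp [neg_one_mul]

lemma gauss_Ici (s : ℝ) : gaussianReal 0 1 (Ici s) = gaussianReal 0 1 (Iic (-s)) := by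
  conv_lhs => rw [← gauss_neg]
  rw [Measure.map_apply (measurable_neg) measurableSet_Ici]
  congr 1; ext x; simp [neg_le]

lemma integral_id_mul_exp {b : ℝ} (hb : 0 < b) :
    ∫ r in Ioi (0:ℝ), r * rexp (-b * r ^ 2) = (2 * b)⁻¹ := by
  have hderiv : ∀ x ∈ Ici (0:ℝ), HasDerivAt (fun x : ℝ => -(2*b)⁻¹ * rexp (-b * x ^ 2))
      (x * rexp (-b * x ^ 2)) x := by
    intro x _
    have h1 : HasDerivAt (fun x : ℝ => -b * x ^ 2) (-b * (2 * x)) x := by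
      simpa using ((hasDerivAt_pow 2 x).const_mul (-b))
    have := (h1.exp).const_mul (-(2*b)⁻¹)
    refine this.congr_deriv ?_
    field_simp
  have hint : IntegrableOn (fun r : ℝ => r * rexp (-b * r ^ 2)) (Ioi 0) :=
    (integrable_mul_exp_neg_mul_sq hb).integrableOn
  have htend : Filter.Tendsto (fun x : ℝ => -(2*b)⁻¹ * rexp (-b * x ^ 2)) Filter.atTop (nhds 0) := by
    have : Filter.Tendsto (fun x : ℝ => -b * x ^ 2) Filter.atTop Filter.atBot := by
      apply Filter.Tendsto.const_mul_atTop_of_neg (by linarith : -b < 0)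
      exact Filter.tendsto_pow_atTop (by norm_num)
    have := (Real.tendsto_exp_atBot.comp this).const_mul (-(2*b)⁻¹)
    simpa using this
  have := integral_Ioi_of_hasDerivAt_of_tendsto' hderiv hint htend
  simp only [this]
  norm_num

lemma lintegral_even {h : ℝ → ℝ≥0∞} (hm : Measurable h) (he : ∀ x, h (-x) = h x) :
    ∫⁻ x, h x = 2 * ∫⁻ x in Ioi (0:ℝ), h x := by
  have h0 : ∫⁻ x in Iio (0:ℝ), h x = ∫⁻ x in Ioi (0:ℝ), h x := by
    have hmap : Measure.map (fun x : ℝ => -x) volume = volume := by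
      have := Real.map_volume_mul_left (a := -1) (by norm_num)
      simpa [neg_one_mul] using this
    conv_lhs => rw [← hmap]
    rw [MeasureTheory.setLIntegral_map measurableSet_Iio hm measurable_neg]
    have : (fun x : ℝ => -x) ⁻¹' Iio 0 = Ioi 0 := by ext x; simp
    rw [this]
    exact lintegral_congr fun x => he x
  have hsplit : ∫⁻ x, h x = (∫⁻ x in Iio (0:ℝ), h x) + ∫⁻ x in Ici (0:ℝ), h x := by
    rw [← lintegral_add_compl (h) (measurableSet_Iio (a := (0:ℝ)))]
    congr 1
    congr 1
    ext x; simp [not_lt]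
  have hIci : ∫⁻ x in Ici (0:ℝ), h x = ∫⁻ x in Ioi (0:ℝ), h x := by
    rw [← Ioi_union_left, lintegral_union (measurableSet_singleton 0)]
    · simp
    · simp [Set.disjoint_singleton_right]
  rw [hsplit, h0, hIci, two_mul]

lemma pdfR_eq (x : ℝ) : gaussianPDFReal 0 1 x = (√(2*π))⁻¹ * rexp (-x^2/2) := by
  simp [gaussianPDFReal]

lemma pdfR_even (x : ℝ) : gaussianPDFReal 0 1 (-x) = gaussianPDFReal 0 1 x := by
  simp [pdfR_eq]

lemma pdfR_nonneg (x : ℝ) : 0 ≤ gaussianPDFReal 0 1 x := gaussianPDFReal_nonneg 0 1 x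

lemma cauchy_weight (t : ℝ) :
    ∫⁻ y, ENNReal.ofReal (|y| * (gaussianPDFReal 0 1 (|y| * t) * gaussianPDFReal 0 1 y))
      = ENNReal.ofReal (π⁻¹ * (1 + t^2)⁻¹) := by
  set b : ℝ := (1 + t^2)/2 with hbdef
  have hb : 0 < b := by positivity
  have hkey : ∀ y ∈ Ioi (0:ℝ), |y| * (gaussianPDFReal 0 1 (|y| * t) * gaussianPDFReal 0 1 y)
      = (2*π)⁻¹ * (y * rexp (-b * y^2)) := by
    intro y hy
    rw [abs_of_pos hy, pdfR_eq, pdfR_eq]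
    have h2π : (√(2*π))⁻¹ * (√(2*π))⁻¹ = (2*π)⁻¹ := by
      rw [← mul_inv, Real.mul_self_sqrt (by positivity)]
    have hexp : -(y*t)^2/2 + -y^2/2 = -b * y^2 := by rw [hbdef]; ring
    calc y * ((√(2*π))⁻¹ * rexp (-(y*t)^2/2) * ((√(2*π))⁻¹ * rexp (-y^2/2)))
        = ((√(2*π))⁻¹ * (√(2*π))⁻¹) * (y * (rexp (-(y*t)^2/2) * rexp (-y^2/2))) := by ring
      _ = (2*π)⁻¹ * (y * rexp (-b * y^2)) := by rw [h2π, ← Real.exp_add, hexp]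
  have hmeas : Measurable fun y : ℝ =>
      ENNReal.ofReal (|y| * (gaussianPDFReal 0 1 (|y| * t) * gaussianPDFReal 0 1 y)) := by
    apply Measurable.ennreal_ofReal
    exact (measurable_abs).mul (((measurable_gaussianPDFReal 0 1).comp
      (measurable_abs.mul_const t)).mul (measurable_gaussianPDFReal 0 1))
  rw [lintegral_even hmeas (by intro x; rw [abs_neg, pdfR_even])]
  have hint : IntegrableOn (fun y : ℝ => (2*π)⁻¹ * (y * rexp (-b * y^2))) (Ioi 0) :=
    ((integrable_mul_exp_neg_mul_sq hb).const_mul _).integrableOn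
  rw [setLIntegral_congr_fun measurableSet_Ioi (fun y hy => by
    rw [hkey y hy])]
  rw [← ofReal_integral_eq_lintegral_ofReal hint ((ae_restrict_iff' measurableSet_Ioi).2
    (Filter.Eventually.of_forall (fun y hy => ?_)))]
  · rw [MeasureTheory.integral_const_mul, integral_id_mul_exp hb, ← ENNReal.ofReal_ofNat 2,
      ← ENNReal.ofReal_mul (by norm_num)]
    congr 1
    rw [hbdef]
    field_simp
  · have : (0:ℝ) < y := hy
    positivity


lemma E1_integrableOn {x : ℝ} (hx : 0 < x) :
    IntegrableOn (fun t : ℝ => rexp (-t) / t) (Ioi x) := by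
  have hexp : IntegrableOn (fun t : ℝ => x⁻¹ * rexp (-t)) (Ioi x) := by
    have : IntegrableOn (fun t : ℝ => rexp (-(1:ℝ) * t)) (Ioi x) :=
      exp_neg_integrableOn_Ioi x one_pos
    have := this.const_mul x⁻¹
    simp only [neg_one_mul] at this
    exact this
  refine Integrable.mono hexp ?_ ?_
  · exact ((Real.measurable_exp.comp measurable_neg).div measurable_id).aestronglyMeasurable
  · refine (ae_restrict_iff' measurableSet_Ioi).2 (Filter.Eventually.of_forall fun t ht => ?_)
    have htpos : 0 < t := lt_trans hx ht
    rw [Real.norm_eq_abs, Real.norm_eq_abs, abs_of_nonneg (by positivity),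
      abs_of_nonneg (by positivity)]
    rw [div_eq_inv_mul]
    gcongr
    exact le_of_lt ht

lemma E1_nonneg {x : ℝ} (hx : 0 ≤ x) : 0 ≤ expInt x := by
  apply setIntegral_nonneg measurableSet_Ioi
  intro t ht
  have : 0 < t := lt_of_le_of_lt hx ht
  positivity

lemma E1_continuousOn : ContinuousOn expInt (Ioi (0:ℝ)) := by
  intro x₀ hx₀
  have hx₀' : (0:ℝ) < x₀ := hx₀
  apply ContinuousAt.continuousWithinAt
  have hE : expInt = fun x => ∫ t, (Ioi x).indicator (fun t => rexp (-t) / t) t := by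
    ext x; rw [expInt, ← integral_indicator measurableSet_Ioi]
  rw [hE]
  refine continuousAt_of_dominated ?_ ?_ ?_ ?_
    (bound := (Ioi (x₀/2)).indicator fun t => (x₀/2)⁻¹ * rexp (-t))
  · exact Filter.Eventually.of_forall fun x =>
      (((Real.measurable_exp.comp measurable_neg).div measurable_id).indicator
        measurableSet_Ioi).aestronglyMeasurable
  · have hnb : ∀ᶠ x in nhds x₀, x ∈ Ioi (x₀/2) := by
      apply eventually_nhds_iff.2
      exact ⟨Ioi (x₀/2), fun y hy => hy, isOpen_Ioi, by simpa using half_lt_self hx₀'⟩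
    filter_upwards [hnb] with x hx
    refine Filter.Eventually.of_forall fun t => ?_
    by_cases ht : t ∈ Ioi x
    · have ht2 : t ∈ Ioi (x₀/2) := mem_Ioi.2 (lt_trans (mem_Ioi.1 hx) (mem_Ioi.1 ht))
      rw [Set.indicator_of_mem ht, Set.indicator_of_mem ht2]
      have htpos : 0 < t := lt_trans (lt_trans (by positivity) hx) ht
      rw [Real.norm_eq_abs, abs_of_nonneg (by positivity), div_eq_inv_mul]
      have h1 : (0:ℝ) < x₀/2 := by positivity
      gcongr
      exact le_of_lt ht2
    · rw [Set.indicator_of_notMem ht]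
      simp only [norm_zero]
      apply Set.indicator_nonneg
      intro t' ht'
      have : (0:ℝ) < x₀/2 := by positivity
      positivity
  · have : IntegrableOn (fun t : ℝ => rexp (-(1:ℝ) * t)) (Ioi (x₀/2)) :=
      exp_neg_integrableOn_Ioi _ one_pos
    have h2 := this.const_mul (x₀/2)⁻¹
    simp only [neg_one_mul] at h2
    exact (integrable_indicator_iff measurableSet_Ioi).2 h2
  · have : ∀ᵐ t : ℝ, t ≠ x₀ := by
      rw [ae_iff]
      have : {t : ℝ | ¬ t ≠ x₀} = {x₀} := by ext t; simp
      rw [this]; exact Real.volume_singleton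
    filter_upwards [this] with t ht
    rcases lt_or_gt_of_ne ht with h | h
    · -- t < x₀ : eventually 0
      have heq : (fun x : ℝ => (Ioi x).indicator (fun t => rexp (-t) / t) t) =ᶠ[nhds x₀]
          fun _ => 0 := by
        apply Filter.eventuallyEq_of_mem (Ioi_mem_nhds h)
        intro x hx
        exact Set.indicator_of_notMem (by simpa using le_of_lt hx) _
      exact continuousAt_const.congr heq.symm
    · -- t > x₀ : eventually const
      have heq : (fun x : ℝ => (Ioi x).indicator (fun t => rexp (-t) / t) t) =ᶠ[nhds x₀]
          fun _ => rexp (-t) / t := by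
        apply Filter.eventuallyEq_of_mem (Iio_mem_nhds h)
        intro x hx
        exact Set.indicator_of_mem (by simpa using hx) _
      exact continuousAt_const.congr heq.symm

lemma image_g {z : ℝ} (hz : z ≠ 0) :
    (fun t : ℝ => z^2*(1+t^2)/2) '' Ioi 0 = Ioi (z^2/2) := by
  have hz2 : 0 < z^2 := by positivity
  ext s
  simp only [Set.mem_image, Set.mem_Ioi]
  constructor
  · rintro ⟨t, ht, rfl⟩
    nlinarith [mul_pos hz2 (pow_pos ht 2)]
  · intro hs
    refine ⟨√(2*s/z^2 - 1), ?_, ?_⟩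
    · apply Real.sqrt_pos.2
      rw [sub_pos, lt_div_iff₀ hz2]
      nlinarith
    · rw [Real.sq_sqrt (by rw [sub_nonneg, le_div_iff₀ hz2]; nlinarith)]
      field_simp
      ring

lemma subst_E1 {z : ℝ} (hz : z ≠ 0) :
    expInt (z^2/2) = 2 * rexp (-(z^2/2)) *
      ∫ t in Ioi (0:ℝ), t * rexp (-(z^2/2)*t^2) / (1+t^2) := by
  have hz2 : 0 < z^2 := by positivity
  have hderiv : ∀ t ∈ Ioi (0:ℝ), HasDerivWithinAt (fun t : ℝ => z^2*(1+t^2)/2)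
      (z^2 * t) (Ioi 0) t := by
    intro t _
    have : HasDerivAt (fun t : ℝ => z^2*(1+t^2)/2) (z^2 * t) t := by
      have h1 : HasDerivAt (fun t : ℝ => 1+t^2) (2*t) t := by
        simpa using ((hasDerivAt_pow 2 t).const_add 1)
      have := (h1.const_mul (z^2)).div_const 2
      exact this.congr_deriv (by ring)
    exact this.hasDerivWithinAt
  have hinj : Set.InjOn (fun t : ℝ => z^2*(1+t^2)/2) (Ioi 0) := by
    intro t₁ h₁ t₂ h₂ heq
    simp only [Set.mem_Ioi] at h₁ h₂
    simp only at heq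
    have h4 : z^2*(1+t₁^2) = z^2*(1+t₂^2) := by linarith
    have h5 := mul_left_cancel₀ (ne_of_gt hz2) h4
    have h6 : t₁^2 = t₂^2 := by linarith
    calc t₁ = √(t₁^2) := (Real.sqrt_sq h₁.le).symm
      _ = √(t₂^2) := by rw [h6]
      _ = t₂ := Real.sqrt_sq h₂.le
  have key := integral_image_eq_integral_abs_deriv_smul measurableSet_Ioi hderiv hinj
    (fun s => rexp (-s) / s)
  rw [image_g hz] at key
  have heq : expInt (z^2/2) = ∫ t in Ioi (0:ℝ),
      |z^2 * t| • (rexp (-(z^2*(1+t^2)/2)) / (z^2*(1+t^2)/2)) := key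
  rw [heq, ← MeasureTheory.integral_const_mul]
  apply setIntegral_congr_fun measurableSet_Ioi
  intro t ht
  have ht' : (0:ℝ) < t := ht
  have h1t : (0:ℝ) < 1 + t^2 := by positivity
  simp only [smul_eq_mul]
  rw [abs_of_pos (by positivity : (0:ℝ) < z^2*t)]
  rw [show -(z^2*(1+t^2)/2) = -(z^2/2) + -(z^2/2)*t^2 by ring, Real.exp_add]
  field_simp

lemma f_eq {z : ℝ} (hz : z ≠ 0) :
    ∫⁻ t, ENNReal.ofReal (|t| * gaussianPDFReal 0 1 (z*t) * (π⁻¹ * (1+t^2)⁻¹))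
      = ENNReal.ofReal ((1 / (√2 * π ^ ((3:ℝ)/2))) * (rexp (z^2/2) * expInt (z^2/2))) := by
  have hb : (0:ℝ) < z^2/2 := by positivity
  have hmeas : Measurable fun t : ℝ =>
      ENNReal.ofReal (|t| * gaussianPDFReal 0 1 (z*t) * (π⁻¹ * (1+t^2)⁻¹)) := by
    apply Measurable.ennreal_ofReal
    exact ((measurable_abs.mul ((measurable_gaussianPDFReal 0 1).comp
      (measurable_id.const_mul z))).mul
      ((measurable_const.mul ((measurable_const.add (measurable_id.pow_const 2)).inv))))
  rw [lintegral_even hmeas (by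
    intro t
    rw [abs_neg, mul_neg, pdfR_even, neg_pow]
    norm_num)]
  set c1 : ℝ := (√(2*π))⁻¹ * π⁻¹ with hc1
  have hkey : ∀ t ∈ Ioi (0:ℝ), |t| * gaussianPDFReal 0 1 (z*t) * (π⁻¹ * (1+t^2)⁻¹)
      = c1 * (t * rexp (-(z^2/2)*t^2) / (1+t^2)) := by
    intro t ht
    have ht' : (0:ℝ) < t := ht
    have h1t : (0:ℝ) < 1 + t^2 := by positivity
    rw [abs_of_pos ht', pdfR_eq, show -(z*t)^2/2 = -(z^2/2)*t^2 by ring, hc1]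
    field_simp
  rw [setLIntegral_congr_fun measurableSet_Ioi (fun t ht => by
    rw [hkey t ht])]
  have hint0 : Integrable (fun t : ℝ => t * rexp (-(z^2/2)*t^2)) := by
    simpa using integrable_mul_exp_neg_mul_sq hb
  have hint : IntegrableOn (fun t : ℝ => c1 * (t * rexp (-(z^2/2)*t^2) / (1+t^2))) (Ioi 0) := by
    refine (Integrable.mono hint0 ?_ (Filter.Eventually.of_forall fun t => ?_)).const_mul c1
      |>.integrableOn
    · exact (((measurable_id.mul ((Real.measurable_exp).comp
        ((measurable_id.pow_const 2).const_mul _))).div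
        (measurable_const.add (measurable_id.pow_const 2)))).aestronglyMeasurable
    · have h1t : (0:ℝ) < 1 + t^2 := by positivity
      rw [Real.norm_eq_abs, Real.norm_eq_abs, abs_div, abs_of_pos h1t, div_le_iff₀ h1t]
      nlinarith [abs_nonneg (t * rexp (-(z^2/2)*t^2)), sq_nonneg t,
        abs_nonneg (t * rexp (-(z^2/2)*t^2)) ]
  rw [← ofReal_integral_eq_lintegral_ofReal hint ((ae_restrict_iff' measurableSet_Ioi).2
    (Filter.Eventually.of_forall (fun t ht => by
      have ht' : (0:ℝ) < t := ht
      have h1t : (0:ℝ) < 1 + t^2 := by positivity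
      have : 0 ≤ c1 := by rw [hc1]; positivity
      positivity)))]
  rw [MeasureTheory.integral_const_mul]
  have hI : ∫ t in Ioi (0:ℝ), t * rexp (-(z^2/2)*t^2) / (1+t^2)
      = rexp (z^2/2) * expInt (z^2/2) / 2 := by
    rw [subst_E1 hz]
    rw [show rexp (z^2/2) * (2 * rexp (-(z^2/2)) * ∫ t in Ioi (0:ℝ),
      t * rexp (-(z^2/2)*t^2) / (1+t^2)) / 2 = (rexp (z^2/2) * rexp (-(z^2/2))) *
      ∫ t in Ioi (0:ℝ), t * rexp (-(z^2/2)*t^2) / (1+t^2) by ring, ← Real.exp_add]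
    simp
  rw [hI]
  rw [← ENNReal.ofReal_ofNat 2, ← ENNReal.ofReal_mul (by norm_num)]
  congr 1
  have hpi32 : π ^ ((3:ℝ)/2) = π * √π := by
    rw [show (3:ℝ)/2 = 1 + 1/2 by norm_num, Real.rpow_add pi_pos, Real.rpow_one,
      ← Real.sqrt_eq_rpow]
  have hsq : √(2*π) = √2 * √π := Real.sqrt_mul (by norm_num) π
  rw [hpi32, hc1, hsq]
  have h2 : (0:ℝ) < √2 := by positivity
  have hp : (0:ℝ) < √π := Real.sqrt_pos.2 pi_pos
  field_simp

lemma cdf_subst {t : ℝ} (ht : t ≠ 0) (a : ℝ) :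
    ∫⁻ z in Iic a, ENNReal.ofReal (|t| * gaussianPDFReal 0 1 (z*t))
      = gaussianReal 0 1 (Iic (a*|t|)) := by
  have ht' : (0:ℝ) < |t| := abs_pos.2 ht
  have hmeasf : Measurable fun z : ℝ => ENNReal.ofReal (|t| * gaussianPDFReal 0 1 (z*t)) :=
    (measurable_const.mul ((measurable_gaussianPDFReal 0 1).comp
      (measurable_id.mul_const t))).ennreal_ofReal
  rw [← lintegral_indicator measurableSet_Iic _]
  rw [lem_scale (c := |t|⁻¹) (inv_ne_zero (ne_of_gt ht'))
    (hmeasf.indicator measurableSet_Iic)]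
  have hpoint : ∀ u : ℝ, (Iic a).indicator
      (fun z => ENNReal.ofReal (|t| * gaussianPDFReal 0 1 (z*t))) (|t|⁻¹ * u)
      = (Iic (a*|t|)).indicator
        (fun u => ENNReal.ofReal |t| * gaussianPDF 0 1 u) u := by
    intro u
    have hmem : |t|⁻¹ * u ∈ Iic a ↔ u ∈ Iic (a*|t|) := by
      simp only [Set.mem_Iic]
      rw [inv_mul_le_iff₀ ht', mul_comm]
    have hval : ENNReal.ofReal (|t| * gaussianPDFReal 0 1 ((|t|⁻¹*u)*t))
        = ENNReal.ofReal |t| * gaussianPDF 0 1 u := by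
      have hsq : ((|t|⁻¹*u)*t)^2 = u^2 := by
        rw [mul_pow, mul_pow, inv_pow, sq_abs]
        field_simp
      rw [ENNReal.ofReal_mul (abs_nonneg t), gaussianPDF]
      congr 2
      rw [pdfR_eq, pdfR_eq, hsq]
    by_cases hu : u ∈ Iic (a*|t|)
    · rw [Set.indicator_of_mem (hmem.2 hu), Set.indicator_of_mem hu, hval]
    · rw [Set.indicator_of_notMem (fun h => hu (hmem.1 h)), Set.indicator_of_notMem hu]
  simp_rw [hpoint]
  rw [lintegral_indicator measurableSet_Iic _,
    lintegral_const_mul _ (measurable_gaussianPDF 0 1)]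
  rw [← gaussianReal_apply 0 one_ne_zero]
  rw [abs_of_pos (inv_pos.2 ht'), ← mul_assoc, ← ENNReal.ofReal_mul (le_of_lt (inv_pos.2 ht')),
    inv_mul_cancel₀ (ne_of_gt ht'), ENNReal.ofReal_one, one_mul]

lemma chain2 (a : ℝ) :
    ∫⁻ z in Iic a, ENNReal.ofReal
        ((1 / (√2 * π ^ ((3:ℝ)/2))) * (rexp (z^2/2) * expInt (z^2/2)))
      = ∫⁻ t, gaussianReal 0 1 (Iic (a*|t|)) * ENNReal.ofReal (π⁻¹ * (1+t^2)⁻¹) := by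
  have hFmeas : Measurable fun p : ℝ × ℝ =>
      ENNReal.ofReal (|p.2| * gaussianPDFReal 0 1 (p.1*p.2) * (π⁻¹ * (1+p.2^2)⁻¹)) := by
    apply Measurable.ennreal_ofReal
    exact ((measurable_snd.abs.mul ((measurable_gaussianPDFReal 0 1).comp
      (measurable_fst.mul measurable_snd))).mul
      (measurable_const.mul ((measurable_const.add (measurable_snd.pow_const 2)).inv)))
  have step1 : ∫⁻ z in Iic a, ENNReal.ofReal
        ((1 / (√2 * π ^ ((3:ℝ)/2))) * (rexp (z^2/2) * expInt (z^2/2)))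
      = ∫⁻ z in Iic a, ∫⁻ t, ENNReal.ofReal
          (|t| * gaussianPDFReal 0 1 (z*t) * (π⁻¹ * (1+t^2)⁻¹)) := by
    apply lintegral_congr_ae
    have h0 : ∀ᵐ z : ℝ ∂(volume.restrict (Iic a)), z ≠ 0 := by
      refine ae_restrict_of_ae ?_
      rw [ae_iff]
      have : {z : ℝ | ¬ z ≠ 0} = {0} := by ext z; simp
      rw [this]; exact Real.volume_singleton
    filter_upwards [h0] with z hz
    exact (f_eq hz).symm
  rw [step1]
  rw [lintegral_lintegral_swap (hFmeas.aemeasurable)]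
  apply lintegral_congr_ae
  have h0 : ∀ᵐ t : ℝ, t ≠ 0 := by
    rw [ae_iff]
    have : {t : ℝ | ¬ t ≠ 0} = {0} := by ext t; simp
    rw [this]; exact Real.volume_singleton
  filter_upwards [h0] with t ht
  have hsplit : ∀ z : ℝ, ENNReal.ofReal (|t| * gaussianPDFReal 0 1 (z*t) * (π⁻¹ * (1+t^2)⁻¹))
      = ENNReal.ofReal (|t| * gaussianPDFReal 0 1 (z*t)) * ENNReal.ofReal (π⁻¹ * (1+t^2)⁻¹) := by
    intro z
    rw [ENNReal.ofReal_mul (mul_nonneg (abs_nonneg t) (pdfR_nonneg _))]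
  simp_rw [hsplit]
  have hm : Measurable fun z : ℝ => ENNReal.ofReal (|t| * gaussianPDFReal 0 1 (z*t)) := by
    apply Measurable.ennreal_ofReal
    apply Measurable.const_mul
    exact (measurable_gaussianPDFReal 0 1).comp (measurable_id.mul_const t)
  rw [lintegral_mul_const _ hm, cdf_subst ht a]

lemma gauss_zero : gaussianReal 0 1 ({0} : Set ℝ) = 0 := by
  rw [gaussianReal_apply 0 one_ne_zero, setLIntegral_measure_zero _ _ Real.volume_singleton]

lemma section_eq {a w y : ℝ} (hw : w ≠ 0) (hy : y ≠ 0) :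
    gaussianReal 0 1 {x : ℝ | x * y / w ≤ a} = gaussianReal 0 1 (Iic (a * (|w|/|y|))) := by
  have hxr : ∀ x : ℝ, x * y / w = x * (y/w) := fun x => mul_div_assoc x y w
  have hr : y/w ≠ 0 := div_ne_zero hy hw
  have habs : |y/w| = |y|/|w| := abs_div y w
  have hwa : (0:ℝ) < |w| := abs_pos.2 hw
  have hya : (0:ℝ) < |y| := abs_pos.2 hy
  have hval : a / |y/w| = a * (|w|/|y|) := by
    rw [habs]; field_simp
  rcases lt_or_gt_of_ne hr with hneg | hpos
  · have hset : {x : ℝ | x * y / w ≤ a} = Ici (a / (y/w)) := by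
      ext x
      simp only [Set.mem_setOf_eq, Set.mem_Ici, hxr]
      rw [div_le_iff_of_neg hneg]
    rw [hset, gauss_Ici]
    congr 1
    rw [← hval, abs_of_neg hneg, div_neg]
  · have hset : {x : ℝ | x * y / w ≤ a} = Iic (a / (y/w)) := by
      ext x
      simp only [Set.mem_setOf_eq, Set.mem_Iic, hxr]
      rw [le_div_iff₀ hpos]
    rw [hset]
    congr 1
    rw [← hval, abs_of_pos hpos]

lemma chain1 (a : ℝ) :
    (gaussianReal 0 1).prod ((gaussianReal 0 1).prod (gaussianReal 0 1))
      {p : ℝ × ℝ × ℝ | p.2.2 * p.2.1 / p.1 ≤ a}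
    = ∫⁻ t, gaussianReal 0 1 (Iic (a*|t|)) * ENNReal.ofReal (π⁻¹ * (1+t^2)⁻¹) := by
  set μg := gaussianReal 0 1 with hμgdef
  set φ := gaussianPDF 0 1 with hφdef
  set Φ : ℝ → ℝ≥0∞ := fun s => gaussianReal 0 1 (Iic s) with hΦdef
  have hΦmeas : Measurable Φ := meas_gaussCDF
  have hφmeas : Measurable φ := measurable_gaussianPDF 0 1
  have hg1 : ∀ w : ℝ, Measurable fun y : ℝ => Φ (a * (|w|/|y|)) := fun w =>
    hΦmeas.comp (measurable_const.mul (measurable_const.div measurable_abs))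
  have hg2 : ∀ w : ℝ, Measurable fun y : ℝ => φ y * Φ (a * (|w|/|y|)) := fun w =>
    hφmeas.mul (hg1 w)
  have hKmeas : Measurable fun p : ℝ × ℝ => Φ (a * (|p.1|/|p.2|)) :=
    hΦmeas.comp (measurable_const.mul (measurable_fst.abs.div measurable_snd.abs))
  have hmeasfun : Measurable fun p : ℝ × ℝ × ℝ => p.2.2 * p.2.1 / p.1 :=
    (measurable_snd.snd.mul measurable_snd.fst).div measurable_fst
  have hS : MeasurableSet {p : ℝ × ℝ × ℝ | p.2.2 * p.2.1 / p.1 ≤ a} :=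
    hmeasfun measurableSet_Iic
  have hae : ∀ᵐ w : ℝ ∂μg, w ≠ 0 := by
    rw [ae_iff]
    have : {w : ℝ | ¬ w ≠ 0} = {0} := by ext w; simp
    rw [this]; exact gauss_zero
  -- step 1 : to double integral of Φ
  have step1 : (μg.prod (μg.prod μg)) {p : ℝ × ℝ × ℝ | p.2.2 * p.2.1 / p.1 ≤ a}
      = ∫⁻ w, ∫⁻ y, Φ (a * (|w|/|y|)) ∂μg ∂μg := by
    rw [Measure.prod_apply hS]
    apply lintegral_congr_ae
    filter_upwards [hae] with w hw
    have hSw : MeasurableSet (Prod.mk w ⁻¹' {p : ℝ × ℝ × ℝ | p.2.2 * p.2.1 / p.1 ≤ a}) :=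
      hS.preimage measurable_prodMk_left
    rw [Measure.prod_apply hSw]
    apply lintegral_congr_ae
    filter_upwards [hae] with y hy
    have : Prod.mk y ⁻¹' (Prod.mk w ⁻¹' {p : ℝ × ℝ × ℝ | p.2.2 * p.2.1 / p.1 ≤ a})
        = {x : ℝ | x * y / w ≤ a} := rfl
    rw [this]
    exact section_eq hw hy
  rw [step1]
  -- step 2 : with density
  have hμg : μg = volume.withDensity φ := gaussianReal_of_var_ne_zero 0 one_ne_zero
  have hinner_meas : Measurable fun w => ∫⁻ y, (φ y) * Φ (a * (|w|/|y|)) := by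
    apply Measurable.lintegral_prod_right'
      (f := fun p : ℝ × ℝ => φ p.2 * Φ (a * (|p.1|/|p.2|)))
    exact (hφmeas.comp measurable_snd).mul hKmeas
  have step2 : ∫⁻ w, ∫⁻ y, Φ (a * (|w|/|y|)) ∂μg ∂μg
      = ∫⁻ w, φ w * ∫⁻ y, φ y * Φ (a * (|w|/|y|)) ∂volume ∂volume := by
    have hin : ∀ w : ℝ, ∫⁻ y, Φ (a * (|w|/|y|)) ∂μg
        = ∫⁻ y, φ y * Φ (a * (|w|/|y|)) ∂volume := by
      intro w
      rw [hμg, lintegral_withDensity_eq_lintegral_mul volume hφmeas (hg1 w)]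
      rfl
    simp_rw [hin]
    rw [hμg, lintegral_withDensity_eq_lintegral_mul volume hφmeas hinner_meas]
    rfl
  rw [step2]
  -- step 3 : pull φ w inside and swap
  have step3 : ∫⁻ w, φ w * ∫⁻ y, φ y * Φ (a * (|w|/|y|)) ∂volume ∂volume
      = ∫⁻ y, ∫⁻ w, φ w * (φ y * Φ (a * (|w|/|y|))) ∂volume ∂volume := by
    have hpull : ∀ w : ℝ, φ w * ∫⁻ y, φ y * Φ (a * (|w|/|y|)) ∂volume
        = ∫⁻ y, φ w * (φ y * Φ (a * (|w|/|y|))) ∂volume := by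
      intro w
      rw [lintegral_const_mul _ (hg2 w)]
    simp_rw [hpull]
    exact lintegral_lintegral_swap (((hφmeas.comp measurable_fst).mul
      ((hφmeas.comp measurable_snd).mul hKmeas)).aemeasurable)
  rw [step3]
  -- step 4 : scale w = |y| t
  have hae0 : ∀ᵐ y : ℝ, y ≠ (0:ℝ) := by
    rw [ae_iff]
    have : {y : ℝ | ¬ y ≠ 0} = {0} := by ext y; simp
    rw [this]; exact Real.volume_singleton
  have step4 : ∫⁻ y, ∫⁻ w, φ w * (φ y * Φ (a * (|w|/|y|))) ∂volume ∂volume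
      = ∫⁻ y, ∫⁻ t, ENNReal.ofReal |y| * (φ (|y| * t) * (φ y * Φ (a * |t|))) ∂volume ∂volume := by
    apply lintegral_congr_ae
    filter_upwards [hae0] with y hy
    have hya : (0:ℝ) < |y| := abs_pos.2 hy
    have hmeas : Measurable fun w => φ w * (φ y * Φ (a * (|w|/|y|))) :=
      hφmeas.mul (measurable_const.mul (hΦmeas.comp
        ((measurable_abs.div_const _).const_mul a)))
    rw [lem_scale (ne_of_gt hya) hmeas]
    have hg5 : Measurable fun t : ℝ => φ (|y| * t) * (φ y * Φ (a * |t|)) :=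
      (hφmeas.comp (measurable_id.const_mul _)).mul
        (measurable_const.mul (hΦmeas.comp (measurable_abs.const_mul a)))
    rw [lintegral_const_mul _ hg5]
    congr 1
    · rw [abs_abs]
    apply lintegral_congr
    intro t
    show φ (|y| * t) * (φ y * Φ (a * (|(|y| * t)|/|y|))) = _
    congr 3
    rw [abs_mul, abs_abs, mul_comm (|y|) (|t|), mul_div_assoc, div_self (ne_of_gt hya), mul_one]
  rw [step4]
  -- step 5 : swap and integrate out y
  have step5 : ∫⁻ y, ∫⁻ t, ENNReal.ofReal |y| * (φ (|y| * t) * (φ y * Φ (a * |t|))) ∂volume ∂volume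
      = ∫⁻ t, ∫⁻ y, ENNReal.ofReal |y| * (φ (|y| * t) * (φ y * Φ (a * |t|))) ∂volume ∂volume := by
    apply lintegral_lintegral_swap
    apply Measurable.aemeasurable
    have huncurry : Function.uncurry (fun y t : ℝ =>
        ENNReal.ofReal |y| * (φ (|y| * t) * (φ y * Φ (a * |t|))))
        = fun p : ℝ × ℝ => ENNReal.ofReal |p.1| * (φ (|p.1| * p.2) * (φ p.1 * Φ (a * |p.2|))) :=
      rfl
    rw [huncurry]
    exact (measurable_fst.abs.ennreal_ofReal).mul
      ((hφmeas.comp (measurable_fst.abs.mul measurable_snd)).mul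
        ((hφmeas.comp measurable_fst).mul
          (hΦmeas.comp (measurable_snd.abs.const_mul a))))
  rw [step5]
  apply lintegral_congr
  intro t
  have hpt : ∀ y : ℝ, ENNReal.ofReal |y| * (φ (|y| * t) * (φ y * Φ (a * |t|)))
      = ENNReal.ofReal (|y| * (gaussianPDFReal 0 1 (|y| * t) * gaussianPDFReal 0 1 y))
        * Φ (a * |t|) := by
    intro y
    rw [hφdef]
    simp only [gaussianPDF]
    rw [ENNReal.ofReal_mul (abs_nonneg y), ENNReal.ofReal_mul (pdfR_nonneg _)]
    ring
  simp_rw [hpt]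
  have hmul : Measurable fun y : ℝ =>
      ENNReal.ofReal (|y| * (gaussianPDFReal 0 1 (|y| * t) * gaussianPDFReal 0 1 y)) := by
    apply Measurable.ennreal_ofReal
    apply Measurable.mul measurable_abs
    exact ((measurable_gaussianPDFReal 0 1).comp (measurable_abs.mul_const t)).mul
      (measurable_gaussianPDFReal 0 1)
  rw [lintegral_mul_const _ hmul, cauchy_weight t, mul_comm]

/-- With `X₁, X₂, Y₁` independent standard normals, `Z = X₁X₂/Y₁` has density
`z ↦ (1/(√2 π^{3/2})) e^{z²/2} E₁(z²/2)`. -/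
theorem pdf_normal_product_ratio_2_1
    {Ω : Type*} [MeasureSpace Ω] [IsProbabilityMeasure (ℙ : Measure Ω)]
    (W : Fin 3 → Ω → ℝ) (hW : ∀ i, Measurable (W i))
    (hlaw : ∀ i, Measure.map (W i) ℙ = gaussianReal 0 1)
    (hindep : iIndepFun W ℙ) :
    ∀ a : ℝ, ℙ {ω | W 0 ω * W 1 ω / W 2 ω ≤ a} =
      ENNReal.ofReal (∫ z in Set.Iic a,
        (1 / (Real.sqrt 2 * Real.pi ^ ((3 : ℝ) / 2))) *
          (Real.exp (z ^ 2 / 2) * expInt (z ^ 2 / 2))) := by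
  intro a
  set f : ℝ → ℝ := fun z =>
    (1 / (√2 * π ^ ((3:ℝ)/2))) * (rexp (z^2/2) * expInt (z^2/2)) with hfdef
  -- joint law
  have h10 : IndepFun (W 1) (W 0) ℙ := hindep.indepFun (show (1:Fin 3) ≠ 0 by decide)
  have hpair : Measure.map (fun ω => (W 1 ω, W 0 ω)) ℙ
      = (gaussianReal 0 1).prod (gaussianReal 0 1) := by
    rw [(indepFun_iff_map_prod_eq_prod_map_map (hW 1).aemeasurable
      (hW 0).aemeasurable).1 h10, hlaw 1, hlaw 0]
  have h2p : IndepFun (W 2) (fun ω => (W 1 ω, W 0 ω)) ℙ :=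
    (hindep.indepFun_prodMk hW 1 0 2 (by decide) (by decide)).symm
  have htriple : Measure.map (fun ω => (W 2 ω, (W 1 ω, W 0 ω))) ℙ
      = (gaussianReal 0 1).prod ((gaussianReal 0 1).prod (gaussianReal 0 1)) := by
    rw [(indepFun_iff_map_prod_eq_prod_map_map (hW 2).aemeasurable
      ((hW 1).prodMk (hW 0)).aemeasurable).1 h2p, hlaw 2, hpair]
  have hTmeas : Measurable fun ω => (W 2 ω, (W 1 ω, W 0 ω)) :=
    (hW 2).prodMk ((hW 1).prodMk (hW 0))
  have hS : MeasurableSet {p : ℝ × ℝ × ℝ | p.2.2 * p.2.1 / p.1 ≤ a} :=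
    ((measurable_snd.snd.mul measurable_snd.fst).div measurable_fst) measurableSet_Iic
  have hP : ℙ {ω | W 0 ω * W 1 ω / W 2 ω ≤ a}
      = ∫⁻ z in Iic a, ENNReal.ofReal (f z) := by
    have hpre : {ω | W 0 ω * W 1 ω / W 2 ω ≤ a}
        = (fun ω => (W 2 ω, (W 1 ω, W 0 ω))) ⁻¹' {p : ℝ × ℝ × ℝ | p.2.2 * p.2.1 / p.1 ≤ a} :=
      rfl
    rw [hpre, ← Measure.map_apply hTmeas hS, htriple, chain1 a, ← chain2 a]
  have hnn : ∀ z : ℝ, 0 ≤ f z := by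
    intro z
    have h1 : 0 ≤ expInt (z^2/2) := E1_nonneg (by positivity)
    have h2 : (0:ℝ) < √2 * π ^ ((3:ℝ)/2) := by positivity
    have := Real.exp_pos (z^2/2)
    positivity
  have hfin : (∫⁻ z in Iic a, ENNReal.ofReal (f z)) < ⊤ := by
    rw [← hP]
    exact lt_of_le_of_lt prob_le_one ENNReal.one_lt_top
  have hsne : MeasurableSet {z : ℝ | z ≠ 0} := isOpen_ne.measurableSet
  have hcont : ContinuousOn f {z : ℝ | z ≠ 0} := by
    apply ContinuousOn.mul continuousOn_const
    apply ContinuousOn.mul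
    · exact (Real.continuous_exp.comp ((continuous_pow 2).div_const 2)).continuousOn
    · apply E1_continuousOn.comp (((continuous_pow 2).div_const 2).continuousOn)
      intro z hz
      have hz' : z ≠ 0 := hz
      have : (0:ℝ) < z^2/2 := by positivity
      exact this
  have haesm : AEStronglyMeasurable f (volume.restrict (Iic a)) := by
    have h1 : AEStronglyMeasurable f (volume.restrict {z : ℝ | z ≠ 0}) :=
      hcont.aestronglyMeasurable hsne
    have h2 : (Iic a \ {0} : Set ℝ) =ᵐ[volume] (Iic a : Set ℝ) :=
      diff_ae_eq_self.2 (measure_mono_null Set.inter_subset_right Real.volume_singleton)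
    rw [← Measure.restrict_congr_set h2]
    exact h1.mono_measure (Measure.restrict_mono
      (fun z hz => hz.2 : (Iic a \ {0} : Set ℝ) ⊆ {z : ℝ | z ≠ 0}) le_rfl)
  have hint : IntegrableOn f (Iic a) :=
    ⟨haesm, (hasFiniteIntegral_iff_ofReal (Filter.Eventually.of_forall hnn)).2 hfin⟩
  rw [hP, ← ofReal_integral_eq_lintegral_ofReal hint (Filter.Eventually.of_forall hnn)]
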